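/- Let $S_+, S_-$ be finite strictly linearly separable subsets of $\mathbb{R}^n$ and define $A_-^* = \{y^* \in S_- : \exists (c,d),\ c^T y^* + d = 0,\ c^T y + d < 0\ \forall y \in S_- \setminus \{y^*\},\ c^T x + d > 0\ \forall x \in S_+\}$. Then for every point $z \in S_- \setminus A_-^*$, every affine classifier $(c,d)$ with $c^T x + d > 0$ on $S_+$ and $c^T y + d \le 0$ on $A_-^*$ satisfies $c^T z + d \le 0$; i.e., disclosing only $A_-^*$ as negatives leaks no additional negative point. -/

import Mathlib

/-- The leak set: points of the sample `S₊ ∪ S₋` classified positive by some affine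
classifier strictly consistent with disclosed positives `A₊` and negatives `A₋`. -/
def Leak (n : ℕ) (Sp Sm Ap Am : Finset (Fin n → ℝ)) : Set (Fin n → ℝ) :=
  {z ∈ (↑Sp ∪ ↑Sm : Set (Fin n → ℝ)) | ∃ (c : Fin n → ℝ) (d : ℝ),
    (∀ x ∈ Ap, (∑ i, c i * x i) + d > 0) ∧ (∀ y ∈ Am, (∑ i, c i * y i) + d < 0) ∧
    (∑ i, c i * z i) + d > 0}

/-- Strict linear separability of `(S₊, S₋)`. -/
def StrictSep (n : ℕ) (Sp Sm : Finset (Fin n → ℝ)) : Prop :=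
  ∃ (c : Fin n → ℝ) (d : ℝ),
    (∀ x ∈ Sp, (∑ i, c i * x i) + d > 0) ∧ (∀ y ∈ Sm, (∑ i, c i * y i) + d < 0)

/-- The critical negative points `A₋*`. -/
def CritMinus (n : ℕ) (Sp Sm : Finset (Fin n → ℝ)) : Set (Fin n → ℝ) :=
  {ys ∈ (Sm : Set (Fin n → ℝ)) | ∃ (c : Fin n → ℝ) (d : ℝ), (∑ i, c i * ys i) + d = 0 ∧
    (∀ y ∈ Sm, y ≠ ys → (∑ i, c i * y i) + d < 0) ∧
    (∀ x ∈ Sp, (∑ i, c i * x i) + d > 0)}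

/-- The critical positive points `A₊*`. -/
def CritPlus (n : ℕ) (Sp Sm : Finset (Fin n → ℝ)) : Set (Fin n → ℝ) :=
  {xs ∈ (Sp : Set (Fin n → ℝ)) | ∃ (c : Fin n → ℝ) (d : ℝ), (∑ i, c i * xs i) + d = 0 ∧
    (∀ x ∈ Sp, x ≠ xs → (∑ i, c i * x i) + d > 0) ∧
    (∀ y ∈ Sm, (∑ i, c i * y i) + d < 0)}


open scoped Classical

lemma aff_shift (n : ℕ) (c : Fin n → ℝ) (d ε m : ℝ) (i : Fin n) (w : Fin n → ℝ) :
    (∑ j, (c j + ε * (if j = i then 1 else 0)) * w j) + (d - ε*m)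
      = ((∑ j, c j * w j) + d) + ε * (w i - m) := by
  simp [add_mul, Finset.sum_add_distrib, ite_mul, Finset.sum_ite_eq', mul_sub]
  ring

lemma aff_comb (n : ℕ) (c₀ c : Fin n → ℝ) (d₀ d t : ℝ) (w : Fin n → ℝ) :
    (∑ i, ((1-t)*c₀ i + t*c i) * w i) + ((1-t)*d₀ + t*d)
      = (1-t)*((∑ i, c₀ i * w i) + d₀) + t*((∑ i, c i * w i) + d) := by
  simp only [add_mul, Finset.sum_add_distrib, mul_assoc, ← Finset.mul_sum]; ring

lemma comb_zero (a b : ℝ) (h : a - b ≠ 0) :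
    (1 - a/(a-b))*a + (a/(a-b))*b = 0 := by
  field_simp
  ring

lemma critA (n : ℕ) (Sp Sm : Finset (Fin n → ℝ)) :
    ∀ N : ℕ, ∀ (c : Fin n → ℝ) (d : ℝ),
      (Sm.filter (fun y => (∑ i, c i * y i) + d = 0)).card ≤ N →
      (∀ x ∈ Sp, (∑ i, c i * x i) + d > 0) →
      (∀ y ∈ Sm, (∑ i, c i * y i) + d ≤ 0) →
      ∀ y₀ ∈ Sm, (∑ i, c i * y₀ i) + d = 0 →
      ∃ ys ∈ CritMinus n Sp Sm, (∑ i, c i * ys i) + d = 0 := by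
  intro N
  induction N with
  | zero =>
    intro c d hcard hp hm y₀ hy₀ h0
    have hmem : y₀ ∈ Sm.filter (fun y => (∑ i, c i * y i) + d = 0) := by
      simp only [Finset.mem_filter]; exact ⟨hy₀, h0⟩
    have h1 := Finset.card_pos.mpr ⟨y₀, hmem⟩
    exact absurd hcard (Nat.not_le_of_gt h1)
  | succ N ih =>
    intro c d hcard hp hm y₀ hy₀ h0
    set f : (Fin n → ℝ) → ℝ := fun w => (∑ i, c i * w i) + d with hf
    set T : Finset (Fin n → ℝ) := Sm.filter (fun y => (∑ i, c i * y i) + d = 0) with hT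
    have memT : ∀ y, y ∈ T ↔ y ∈ Sm ∧ f y = 0 := by
      intro y; rw [hT]; simp only [Finset.mem_filter]; exact Iff.rfl
    by_cases hsingle : ∀ y ∈ T, y = y₀
    · refine ⟨y₀, ⟨hy₀, c, d, h0, ?_, hp⟩, h0⟩
      intro y hy hne
      rcases lt_or_eq_of_le (hm y hy) with h | h
      · exact h
      · exact absurd (hsingle y ((memT y).mpr ⟨hy, h⟩)) hne
    · push_neg at hsingle
      obtain ⟨y₁, hy₁T, hy₁ne⟩ := hsingle
      obtain ⟨i, hi⟩ : ∃ i, y₁ i ≠ y₀ i := by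
        by_contra h; push_neg at h; exact hy₁ne (funext h)
      have hTne : T.Nonempty := ⟨y₁, hy₁T⟩
      set m : ℝ := (T.image (fun y => y i)).max' (hTne.image _) with hm'
      set S' : Finset (Fin n → ℝ) := (Sp ∪ Sm).filter (fun w => f w ≠ 0) with hS'
      set γ : (Fin n → ℝ) → ℝ := fun w => |f w| / (|w i - m| + 1) with hγ
      set E : Finset ℝ := insert 1 (S'.image γ) with hE
      have hEne : E.Nonempty := Finset.insert_nonempty _ _
      set ε : ℝ := E.min' hEne with hε
      have hεpos : 0 < ε := by
        have hεmem : ε ∈ E := Finset.min'_mem _ _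
        rw [hE, Finset.mem_insert] at hεmem
        rcases hεmem with h | h
        · rw [h]; norm_num
        · obtain ⟨w, hw, hwe⟩ := Finset.mem_image.mp h
          rw [← hwe, hγ]
          have hfw : f w ≠ 0 := (Finset.mem_filter.mp hw).2
          exact div_pos (abs_pos.mpr hfw) (by positivity)
      have hεle : ∀ w ∈ Sp ∪ Sm, f w ≠ 0 → ε * (|w i - m| + 1) ≤ |f w| := by
        intro w hw hfw
        have hmem : γ w ∈ E := by
          rw [hE]
          exact Finset.mem_insert_of_mem
            (Finset.mem_image_of_mem _ (Finset.mem_filter.mpr ⟨hw, hfw⟩))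
        have h1 : ε ≤ γ w := Finset.min'_le _ _ hmem
        have h2 : (0:ℝ) < |w i - m| + 1 := by positivity
        calc ε * (|w i - m| + 1) ≤ γ w * (|w i - m| + 1) :=
              mul_le_mul_of_nonneg_right h1 h2.le
          _ = |f w| := by rw [hγ]; field_simp
      set c' : Fin n → ℝ := fun j => c j + ε * (if j = i then 1 else 0) with hc'
      set d' : ℝ := d - ε * m with hd'
      have hg : ∀ w, (∑ j, c' j * w j) + d' = f w + ε * (w i - m) := fun w =>
        aff_shift n c d ε m i w
      have hneg : ∀ w ∈ Sm, f w < 0 → (∑ j, c' j * w j) + d' < 0 := by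
        intro w hw hfw
        have hle : ε * (|w i - m| + 1) ≤ -(f w) := by
          have := hεle w (Finset.mem_union_right _ hw) (ne_of_lt hfw)
          rwa [abs_of_neg hfw] at this
        rw [hg]
        have h1 : ε * (w i - m) ≤ ε * |w i - m| :=
          mul_le_mul_of_nonneg_left (le_abs_self _) hεpos.le
        have h2 : ε * |w i - m| < ε * (|w i - m| + 1) :=
          mul_lt_mul_of_pos_left (by linarith) hεpos
        linarith
      have hgp : ∀ x ∈ Sp, (∑ j, c' j * x j) + d' > 0 := by
        intro x hx
        have hfx : 0 < f x := hp x hx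
        have hle : ε * (|x i - m| + 1) ≤ f x := by
          have := hεle x (Finset.mem_union_left _ hx) (ne_of_gt hfx)
          rwa [abs_of_pos hfx] at this
        rw [hg]
        have h1 : -(ε * |x i - m|) ≤ ε * (x i - m) := by
          rw [← mul_neg]
          exact mul_le_mul_of_nonneg_left (neg_abs_le _) hεpos.le
        have h2 : ε * |x i - m| < ε * (|x i - m| + 1) :=
          mul_lt_mul_of_pos_left (by linarith) hεpos
        linarith
      have hgm : ∀ y ∈ Sm, (∑ j, c' j * y j) + d' ≤ 0 := by
        intro y hy
        rcases lt_or_eq_of_le (hm y hy) with h | h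
        · exact (hneg y hy h).le
        · have hfy : f y = 0 := h
          rw [hg, hfy, zero_add]
          have hyim : y i ≤ m :=
            Finset.le_max' (T.image (fun y => y i)) (y i)
              (Finset.mem_image_of_mem _ ((memT y).mpr ⟨hy, hfy⟩))
          have := mul_le_mul_of_nonneg_left (by linarith : y i - m ≤ 0) hεpos.le
          simpa using this
      have hmmem : m ∈ T.image (fun y => y i) := Finset.max'_mem _ _
      obtain ⟨y₂, hy₂T, hy₂m⟩ := Finset.mem_image.mp hmmem
      have hy₂Sm : y₂ ∈ Sm := ((memT y₂).mp hy₂T).1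
      have hy₂f : f y₂ = 0 := ((memT y₂).mp hy₂T).2
      have hg0 : (∑ j, c' j * y₂ j) + d' = 0 := by
        rw [hg, hy₂f, hy₂m, sub_self, mul_zero, zero_add]
      have hcard' : (Sm.filter (fun y => (∑ j, c' j * y j) + d' = 0)).card ≤ N := by
        set U : Finset (Fin n → ℝ) :=
          Sm.filter (fun y => (∑ j, c' j * y j) + d' = 0) with hU
        have memU : ∀ y, y ∈ U ↔ y ∈ Sm ∧ (∑ j, c' j * y j) + d' = 0 := by
          intro y; rw [hU]; simp only [Finset.mem_filter]
        have hsub : U ⊆ T := by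
          intro y hy
          obtain ⟨hySm, hyg⟩ := (memU y).mp hy
          refine (memT y).mpr ⟨hySm, ?_⟩
          by_contra hfy
          have hlt : f y < 0 := lt_of_le_of_ne (hm y hySm) hfy
          exact absurd hyg (ne_of_lt (hneg y hySm hlt))
        have hne01 : y₀ ∉ U ∨ y₁ ∉ U := by
          by_contra hcon
          push_neg at hcon
          obtain ⟨h0', h1'⟩ := hcon
          have e0 := ((memU y₀).mp h0').2
          have e1 := ((memU y₁).mp h1').2
          rw [hg] at e0 e1
          have f0 : f y₀ = 0 := h0
          have f1 : f y₁ = 0 := ((memT y₁).mp hy₁T).2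
          rw [f0] at e0; rw [f1] at e1
          have hy0m : y₀ i = m := by
            rcases mul_eq_zero.mp (by linarith : ε * (y₀ i - m) = 0) with h | h
            · exact absurd h (ne_of_gt hεpos)
            · linarith
          have hy1m : y₁ i = m := by
            rcases mul_eq_zero.mp (by linarith : ε * (y₁ i - m) = 0) with h | h
            · exact absurd h (ne_of_gt hεpos)
            · linarith
          exact hi (by rw [hy0m, hy1m])
        have hy₀T : y₀ ∈ T := (memT y₀).mpr ⟨hy₀, h0⟩
        have hstrict : U ⊂ T := by
          rcases hne01 with h | h
          · exact (Finset.ssubset_iff_of_subset hsub).mpr ⟨y₀, hy₀T, h⟩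
          · exact (Finset.ssubset_iff_of_subset hsub).mpr ⟨y₁, hy₁T, h⟩
        have hlt := Finset.card_lt_card hstrict
        exact Nat.lt_succ_iff.mp (lt_of_lt_of_le hlt hcard)
      obtain ⟨ys, hysC, hysg⟩ := ih c' d' hcard' hgp hgm y₂ hy₂Sm hg0
      refine ⟨ys, hysC, ?_⟩
      have hysSm : ys ∈ Sm := hysC.1
      by_contra hfys
      have hlt : f ys < 0 := lt_of_le_of_ne (hm ys hysSm) hfys
      exact absurd hysg (ne_of_lt (hneg ys hysSm hlt))

set_option maxHeartbeats 1000000 in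
/-- disclosing only `A₋*` as negatives leaks no additional negative point:
any affine classifier positive on `S₊` and non-positive on `A₋*` is non-positive on
every `z ∈ S₋ \ A₋*`. -/
theorem stmt16 (n : ℕ) (Sp Sm : Finset (Fin n → ℝ)) (hsep : StrictSep n Sp Sm) :
    ∀ z ∈ (Sm : Set (Fin n → ℝ)) \ CritMinus n Sp Sm,
      ∀ (c : Fin n → ℝ) (d : ℝ),
        (∀ x ∈ Sp, (∑ i, c i * x i) + d > 0) →
        (∀ y ∈ CritMinus n Sp Sm, (∑ i, c i * y i) + d ≤ 0) →
        (∑ i, c i * z i) + d ≤ 0 := by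
  obtain ⟨c₀, d₀, hp₀, hm₀⟩ := hsep
  intro z hz c d hAp hAm
  have hzSm : z ∈ Sm := hz.1
  by_contra hpos
  push_neg at hpos
  set f : (Fin n → ℝ) → ℝ := fun w => (∑ i, c i * w i) + d with hf
  set f₀ : (Fin n → ℝ) → ℝ := fun w => (∑ i, c₀ i * w i) + d₀ with hf₀
  set B : Finset (Fin n → ℝ) := Sm.filter (fun y => 0 < (∑ i, c i * y i) + d) with hB
  have memB : ∀ y, y ∈ B ↔ y ∈ Sm ∧ 0 < f y := by
    intro y; rw [hB]; simp only [Finset.mem_filter]; exact Iff.rfl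
  have hzB : z ∈ B := (memB z).mpr ⟨hzSm, hpos⟩
  have hBne : B.Nonempty := ⟨z, hzB⟩
  set τ : (Fin n → ℝ) → ℝ := fun y => f₀ y / (f₀ y - f y) with hτ
  have hτprop : ∀ y ∈ B, 0 < τ y ∧ τ y < 1 := by
    intro y hy
    obtain ⟨hySm, hyf⟩ := (memB y).mp hy
    have h0 : f₀ y < 0 := hm₀ y hySm
    have hd : f₀ y - f y < 0 := by linarith
    constructor
    · exact div_pos_of_neg_of_neg h0 hd
    · rw [hτ, div_lt_one_of_neg hd]; linarith
  set t : ℝ := B.inf' hBne τ with ht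
  obtain ⟨y₀, hy₀B, hy₀t⟩ := B.exists_mem_eq_inf' hBne τ
  have hy₀Sm : y₀ ∈ Sm := ((memB y₀).mp hy₀B).1
  have hy₀f : 0 < f y₀ := ((memB y₀).mp hy₀B).2
  have hy₀t' : t = τ y₀ := ht.trans hy₀t
  have htpos : 0 < t := by rw [hy₀t']; exact (hτprop y₀ hy₀B).1
  have htlt1 : t < 1 := by rw [hy₀t']; exact (hτprop y₀ hy₀B).2
  have h1t : 0 < 1 - t := by linarith
  have htle : ∀ y ∈ B, t ≤ τ y := fun y hy => Finset.inf'_le τ hy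
  set ct : Fin n → ℝ := fun j => (1-t)*c₀ j + t*c j with hct
  set dt : ℝ := (1-t)*d₀ + t*d with hdt
  have hcomb : ∀ w, (∑ i, ct i * w i) + dt = (1-t)*(f₀ w) + t*(f w) := fun w =>
    aff_comb n c₀ c d₀ d t w
  have hptt : ∀ x ∈ Sp, (∑ i, ct i * x i) + dt > 0 := by
    intro x hx
    rw [hcomb]
    exact add_pos (mul_pos h1t (hp₀ x hx)) (mul_pos htpos (hAp x hx))
  have hmtt : ∀ y ∈ Sm, (∑ i, ct i * y i) + dt ≤ 0 := by
    intro y hy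
    rw [hcomb]
    have h0 : f₀ y < 0 := hm₀ y hy
    by_cases hfy : 0 < f y
    · have hyB : y ∈ B := (memB y).mpr ⟨hy, hfy⟩
      have hle := htle y hyB
      have hdne : f₀ y - f y < 0 := by linarith
      have hne : f₀ y - f y ≠ 0 := ne_of_lt hdne
      have key : τ y * (f y - f₀ y) = -(f₀ y) := by
        calc τ y * (f y - f₀ y) = -(f₀ y / (f₀ y - f y) * (f₀ y - f y)) := by
              rw [hτ]; ring
          _ = -(f₀ y) := by rw [div_mul_cancel₀ _ hne]
      have hmul : t * (f y - f₀ y) ≤ τ y * (f y - f₀ y) :=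
        mul_le_mul_of_nonneg_right hle (by linarith)
      rw [key] at hmul
      nlinarith
    · push_neg at hfy
      have a := mul_neg_of_pos_of_neg h1t h0
      nlinarith [mul_nonneg htpos.le (neg_nonneg.mpr hfy)]
  have hzero : (∑ i, ct i * y₀ i) + dt = 0 := by
    rw [hcomb, hy₀t']
    have h0 : f₀ y₀ < 0 := hm₀ y₀ hy₀Sm
    have hdne : f₀ y₀ - f y₀ ≠ 0 := ne_of_lt (by linarith)
    exact comb_zero (f₀ y₀) (f y₀) hdne
  obtain ⟨ys, hysC, hysg⟩ := critA n Sp Sm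
    ((Sm.filter (fun y => (∑ i, ct i * y i) + dt = 0)).card) ct dt (le_refl _)
    hptt hmtt y₀ hy₀Sm hzero
  have hysSm : ys ∈ Sm := hysC.1
  have hfys : f ys ≤ 0 := hAm ys hysC
  have hf0ys : f₀ ys < 0 := hm₀ ys hysSm
  rw [hcomb] at hysg
  nlinarith [mul_neg_of_pos_of_neg h1t hf0ys, mul_nonneg htpos.le (neg_nonneg.mpr hfys)]
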